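/- Let R be a commutative ring and x₁, …, x_d a regular sequence on R. For every t ≥ 1, the colon ideal ((x₁ᵗ, …, x_dᵗ)R : (x₁, …, x_d)R) equals (x₁ᵗ, …, x_dᵗ, y^{t-1})R, where y = x₁⋯x_d. -/

import Mathlib

open Finset

namespace ColonAux

variable {R : Type*} [CommRing R] {d : ℕ}


/-- the ideal generated by the first `k` elements of the sequence -/
def J (x : Fin d → R) (k : ℕ) : Ideal R := Ideal.span (x '' {j : Fin d | (j : ℕ) < k})

/-- monomial in the sequence -/
def mono (x : Fin d → R) (β : Fin d → ℕ) : R := ∏ i, x i ^ β i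

/-- bump coordinate `i` of a multi-index -/
def addE (β : Fin d → ℕ) (i : Fin d) : Fin d → ℕ := fun j => β j + (if j = i then 1 else 0)

/-- decrease coordinate `i` of a multi-index -/
def subE (β : Fin d → ℕ) (i : Fin d) : Fin d → ℕ := fun j => β j - (if j = i then 1 else 0)

/-- multi-indices of total degree `n` supported on indices `< k` -/
def Bk (d' k n : ℕ) : Finset (Fin d' → ℕ) :=
  (Fintype.piFinset fun _ => Finset.range (n+1)).filter
    (fun β => (∑ i, β i) = n ∧ ∀ j : Fin d', k ≤ (j : ℕ) → β j = 0)

lemma mem_Bk {k n : ℕ} {β : Fin d → ℕ} :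
    β ∈ Bk d k n ↔ (∑ i, β i) = n ∧ ∀ j : Fin d, k ≤ (j : ℕ) → β j = 0 := by
  simp only [Bk, mem_filter, Fintype.mem_piFinset, mem_range, and_iff_right_iff_imp]
  rintro ⟨h1, -⟩ i
  exact lt_of_le_of_lt (h1 ▸ Finset.single_le_sum (fun j _ => Nat.zero_le (β j)) (mem_univ i))
    (Nat.lt_succ_self n)

lemma mono_addE (x : Fin d → R) (β : Fin d → ℕ) (i : Fin d) :
    mono x (addE β i) = x i * mono x β := by
  unfold mono addE
  rw [← Finset.mul_prod_erase (a := i) (h := mem_univ i),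
      ← Finset.mul_prod_erase (f := fun j => x j ^ β j) (a := i) (h := mem_univ i)]
  have : (∏ j ∈ univ.erase i, x j ^ (β j + if j = i then 1 else 0))
      = ∏ j ∈ univ.erase i, x j ^ β j := by
    exact Finset.prod_congr rfl fun j hj => by
      rw [if_neg (Finset.mem_erase.mp hj).1, add_zero]
  rw [this, if_pos rfl, pow_add, pow_one]
  ring

lemma addE_injective (i : Fin d) : Function.Injective (fun β : Fin d → ℕ => addE β i) := by
  intro a b h
  funext j
  have := congrFun h j
  simpa [addE] using this

lemma subE_addE (β : Fin d → ℕ) (i : Fin d) : subE (addE β i) i = β := by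
  funext j; simp [subE, addE]

lemma addE_subE {β : Fin d → ℕ} {i : Fin d} (h : β i ≠ 0) : addE (subE β i) i = β := by
  funext j
  by_cases hj : j = i
  · subst hj; simp [subE, addE]; omega
  · simp [subE, addE, hj]

lemma sum_addE (β : Fin d → ℕ) (i : Fin d) : (∑ j, addE β i j) = (∑ j, β j) + 1 := by
  unfold addE
  rw [Finset.sum_add_distrib, Finset.sum_ite_eq' univ i (fun _ => 1), if_pos (mem_univ i)]

lemma Bk_zero (k : ℕ) : Bk d k 0 = {fun _ => 0} := by
  ext β
  simp only [mem_Bk, Finset.mem_singleton]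
  constructor
  · rintro ⟨h1, -⟩
    funext j
    exact (Finset.sum_eq_zero_iff.mp h1) j (mem_univ j)
  · rintro rfl; simp

lemma prod_pow_mem_pow (x : Fin d → R) (P : Ideal R) (β : Fin d → ℕ)
    (h : ∀ i, β i ≠ 0 → x i ∈ P) :
    mono x β ∈ P ^ (∑ i, β i) := by
  classical
  have key : ∀ s : Finset (Fin d), (∀ i ∈ s, β i ≠ 0 → x i ∈ P) →
      (∏ i ∈ s, x i ^ β i) ∈ P ^ (∑ i ∈ s, β i) := by
    intro s
    induction s using Finset.induction_on with
    | empty => simp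
    | insert _ _ hx ih =>
      rename_i a s'
      intro hs
      rw [Finset.prod_insert hx, Finset.sum_insert hx, pow_add]
      refine Ideal.mul_mem_mul ?_ (ih fun i hi => hs i (Finset.mem_insert_of_mem hi))
      rcases Nat.eq_zero_or_pos (β a) with h0 | h0
      · simp [h0]
      · exact Ideal.pow_mem_pow (hs a (Finset.mem_insert_self a s') (Nat.pos_iff_ne_zero.mp h0)) _
  exact key univ fun i _ => h i

lemma mono_mem {x : Fin d → R} {k n : ℕ} {β : Fin d → ℕ} (hβ : β ∈ Bk d k n) :
    mono x β ∈ (J x k) ^ n := by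
  rw [mem_Bk] at hβ
  rw [← hβ.1]
  refine prod_pow_mem_pow x _ β fun i hi => ?_
  refine Ideal.subset_span ⟨i, ?_, rfl⟩
  by_contra hik
  exact hi (hβ.2 i (not_lt.mp hik))

lemma val_mem {x : Fin d → R} {k n : ℕ} (w : (Fin d → ℕ) → R) :
    (∑ β ∈ Bk d k n, w β * mono x β) ∈ (J x k) ^ n :=
  Ideal.sum_mem _ fun _ hβ => Ideal.mul_mem_left _ _ (mono_mem hβ)

lemma spanRep {ι : Type*} (g : ι → R) (s : Finset ι) {z : R}
    (hz : z ∈ Ideal.span (g '' ↑s)) : ∃ w : ι → R, z = ∑ β ∈ s, w β * g β := by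
  classical
  refine Submodule.span_induction ?_ ?_ ?_ ?_ hz
  · rintro _ ⟨i, hi, rfl⟩
    refine ⟨fun j => if j = i then 1 else 0, ?_⟩
    rw [Finset.sum_eq_single i (fun b _ hb => by simp [hb])
      (fun h => absurd (Finset.mem_coe.mp hi) h)]
    simp
  · exact ⟨0, by simp⟩
  · rintro a b - - ⟨wa, rfl⟩ ⟨wb, rfl⟩
    exact ⟨wa + wb, by simp [add_mul, Finset.sum_add_distrib]⟩
  · rintro r a - ⟨wa, rfl⟩
    exact ⟨r • wa, by simp [Finset.mul_sum, mul_assoc]⟩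

lemma rep_mul_gen (x : Fin d → R) {k n : ℕ} (w : (Fin d → ℕ) → R) {i : Fin d}
    (hik : (i : ℕ) < k) :
    ∃ w' : (Fin d → ℕ) → R,
      (∑ β ∈ Bk d k n, w β * mono x β) * x i = ∑ γ ∈ Bk d k (n+1), w' γ * mono x γ := by
  classical
  refine ⟨fun γ => if γ ∈ (Bk d k n).image (fun β => addE β i) then w (subE γ i) else 0, ?_⟩
  have himg : (Bk d k n).image (fun β => addE β i) ⊆ Bk d k (n+1) := by
    intro γ hγ
    obtain ⟨β, hβ, rfl⟩ := Finset.mem_image.mp hγ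
    rw [mem_Bk] at hβ ⊢
    refine ⟨by rw [sum_addE, hβ.1], fun j hj => ?_⟩
    have hji : j ≠ i := by rintro rfl; omega
    simp [addE, hji, hβ.2 j hj]
  rw [Finset.sum_mul,
    ← Finset.sum_subset himg (fun γ _ hγ => by simp only [if_neg hγ, zero_mul]),
    Finset.sum_image (fun a _ b _ h => addE_injective i h)]
  refine Finset.sum_congr rfl fun β hβ => ?_
  simp only [if_pos (Finset.mem_image_of_mem _ hβ), subE_addE, mono_addE]
  ring

lemma exists_rep_of_mem_pow {x : Fin d → R} {k : ℕ} :
    ∀ {n : ℕ} {z : R}, z ∈ (J x k) ^ n →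
      ∃ w : (Fin d → ℕ) → R, z = ∑ β ∈ Bk d k n, w β * mono x β := by
  intro n
  induction n with
  | zero =>
    intro z _
    exact ⟨fun _ => z, by simp [Bk_zero, mono]⟩
  | succ n ih =>
    intro z hz
    rw [pow_succ] at hz
    refine Submodule.mul_induction_on hz ?_ ?_
    · intro a ha b hb
      obtain ⟨wa, rfl⟩ := ih ha
      clear ha hz
      refine Submodule.span_induction ?_ ?_ ?_ ?_ hb
      · rintro _ ⟨i, hi, rfl⟩
        obtain ⟨w', hw'⟩ := rep_mul_gen x wa (Set.mem_setOf_eq ▸ hi)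
        exact ⟨w', hw'⟩
      · exact ⟨0, by simp⟩
      · rintro u v - - ⟨wu, hu⟩ ⟨wv, hv⟩
        exact ⟨wu + wv, by rw [mul_add, hu, hv]; simp [add_mul, Finset.sum_add_distrib]⟩
      · rintro r u - ⟨wu, hu⟩
        refine ⟨r • wu, ?_⟩
        rw [smul_eq_mul, mul_comm r u, ← mul_assoc, hu]
        simp [Finset.mul_sum, mul_assoc, Finset.sum_mul, mul_comm, mul_left_comm]
    · rintro u v ⟨wu, hu⟩ ⟨wv, hv⟩
      exact ⟨wu + wv, by rw [hu, hv]; simp [add_mul, Finset.sum_add_distrib]⟩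

lemma J_mono (x : Fin d → R) {k l : ℕ} (h : k ≤ l) : J x k ≤ J x l :=
  Ideal.span_mono (Set.image_mono fun j hj => lt_of_lt_of_le hj h)

lemma mem_J_self (x : Fin d → R) {k : ℕ} {i : Fin d} (h : (i : ℕ) < k) : x i ∈ J x k :=
  Ideal.subset_span ⟨i, h, rfl⟩

lemma sum_split {x : Fin d → R} {k : ℕ} (hk : k < d) (n : ℕ) (w : (Fin d → ℕ) → R) :
    ∑ β ∈ Bk d (k+1) (n+1), w β * mono x β
      = (∑ β ∈ Bk d k (n+1), w β * mono x β)
        + x ⟨k, hk⟩ * ∑ β ∈ Bk d (k+1) n, w (addE β ⟨k, hk⟩) * mono x β := by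
  classical
  rw [← Finset.sum_filter_add_sum_filter_not (Bk d (k+1) (n+1)) (fun β => β ⟨k, hk⟩ = 0)]
  congr 1
  · apply Finset.sum_congr _ (fun _ _ => rfl)
    ext β
    simp only [Finset.mem_filter, mem_Bk]
    constructor
    · rintro ⟨⟨h1, h2⟩, h3⟩
      refine ⟨h1, fun j hj => ?_⟩
      rcases Nat.lt_or_ge (j : ℕ) (k+1) with hl | hl
      · have : j = (⟨k, hk⟩ : Fin d) := Fin.ext (by simp only [Fin.val_mk]; omega)
        rwa [this]
      · exact h2 j hl
    · rintro ⟨h1, h2⟩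
      exact ⟨⟨h1, fun j hj => h2 j (by omega)⟩, h2 ⟨k, hk⟩ (by simp)⟩
  · have himg : (Bk d (k+1) (n+1)).filter (fun β => ¬ β ⟨k, hk⟩ = 0)
        = (Bk d (k+1) n).image (fun β => addE β ⟨k, hk⟩) := by
      ext γ
      simp only [Finset.mem_filter, Finset.mem_image, mem_Bk]
      constructor
      · rintro ⟨⟨h1, h2⟩, h3⟩
        refine ⟨subE γ ⟨k, hk⟩, ⟨?_, ?_⟩, addE_subE h3⟩
        · have := sum_addE (subE γ ⟨k, hk⟩) ⟨k, hk⟩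
          rw [addE_subE h3, h1] at this
          omega
        · intro j hj
          have : γ j = 0 := h2 j hj
          simp [subE, this]
      · rintro ⟨β, ⟨h1, h2⟩, rfl⟩
        refine ⟨⟨by rw [sum_addE, h1], fun j hj => ?_⟩, ?_⟩
        · have hji : j ≠ (⟨k, hk⟩ : Fin d) := by
            rintro rfl; simp only [Fin.val_mk] at hj; omega
          simp [addE, hji, h2 j (by omega)]
        · simp [addE]
    rw [himg, Finset.sum_image (fun a _ b _ h => addE_injective ⟨k, hk⟩ h), Finset.mul_sum]
    exact Finset.sum_congr rfl fun β _ => by rw [mono_addE]; ring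

lemma nzd {x : Fin d → R} {k : ℕ} (hk : k < d)
    (hreg1 : ∀ z : R, z * x ⟨k, hk⟩ ∈ J x k → z ∈ J x k)
    (qrk : ∀ n (w : (Fin d → ℕ) → R),
      (∑ β ∈ Bk d k n, w β * mono x β) ∈ (J x k)^(n+1) → ∀ β ∈ Bk d k n, w β ∈ J x k)
    {m : ℕ} {z : R} (hz : z * x ⟨k, hk⟩ ∈ (J x k) ^ m) : z ∈ (J x k) ^ m := by
  suffices h : ∀ j, j ≤ m → z ∈ (J x k) ^ j from h m le_rfl
  intro j hj
  induction j with
  | zero => simp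
  | succ j ih =>
    have hzj : z ∈ (J x k) ^ j := ih (le_trans (Nat.le_succ j) hj)
    obtain ⟨w, hw⟩ := exists_rep_of_mem_pow hzj
    have hval : (∑ β ∈ Bk d k j, (w β * x ⟨k, hk⟩) * mono x β) ∈ (J x k) ^ (j+1) := by
      have e : (∑ β ∈ Bk d k j, (w β * x ⟨k, hk⟩) * mono x β) = z * x ⟨k, hk⟩ := by
        rw [hw, Finset.sum_mul]
        exact Finset.sum_congr rfl fun β _ => by ring
      rw [e]
      exact Ideal.pow_le_pow_right hj hz
    have hcoef := qrk j _ hval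
    rw [hw, pow_succ']
    exact Ideal.sum_mem _ fun β hβ =>
      Ideal.mul_mem_mul (hreg1 _ (hcoef β hβ)) (mono_mem hβ)

theorem QR {x : Fin d → R}
    (hreg : ∀ i : Fin d, ∀ z : R, z * x i ∈ J x (i : ℕ) → z ∈ J x (i : ℕ)) :
    ∀ k, k ≤ d → ∀ n (w : (Fin d → ℕ) → R),
      (∑ β ∈ Bk d k n, w β * mono x β) ∈ (J x k) ^ (n+1) →
      ∀ β ∈ Bk d k n, w β ∈ J x k := by
  intro k
  induction k with
  | zero =>
    intro _ n w hval β hβ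
    obtain ⟨h1, h2⟩ := mem_Bk.mp hβ
    have hβ0 : β = fun _ => 0 := funext fun j => h2 j (Nat.zero_le _)
    have hn : n = 0 := by rw [hβ0] at h1; simpa using h1.symm
    subst hn
    rw [Bk_zero] at hval
    simp only [Finset.sum_singleton] at hval
    have hm : mono x (fun _ => 0) = 1 := by simp [mono]
    rw [hm, mul_one] at hval
    rw [hβ0]
    simpa using hval
  | succ k ihk =>
    intro hk1 n
    have hk : k < d := lt_of_lt_of_le (Nat.lt_succ_self k) hk1
    have hreg1 : ∀ z : R, z * x ⟨k, hk⟩ ∈ J x k → z ∈ J x k := fun z h => hreg ⟨k, hk⟩ z h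
    have qrk := ihk (Nat.le_of_succ_le hk1)
    induction n with
    | zero =>
      intro w hval β hβ
      rw [Bk_zero] at hval hβ
      obtain rfl := Finset.mem_singleton.mp hβ
      simp only [Finset.sum_singleton] at hval
      have h1 : mono x (fun _ => 0) = 1 := by simp [mono]
      rw [h1, mul_one] at hval
      simpa using hval
    | succ n ihn =>
      intro w hval β hβ
      obtain ⟨q, hq⟩ := exists_rep_of_mem_pow hval
      have e : (∑ β ∈ Bk d k (n+1), w β * mono x β)
            + x ⟨k, hk⟩ * (∑ β ∈ Bk d (k+1) n, w (addE β ⟨k, hk⟩) * mono x β)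
          = (∑ β ∈ Bk d k (n+2), q β * mono x β)
            + x ⟨k, hk⟩ * (∑ β ∈ Bk d (k+1) (n+1), q (addE β ⟨k, hk⟩) * mono x β) := by
        rw [← sum_split hk n w, hq, sum_split hk (n+1) q]
      have hGQ : (∑ β ∈ Bk d k (n+1), w β * mono x β)
          - (∑ β ∈ Bk d k (n+2), q β * mono x β) ∈ (J x k) ^ (n+1) :=
        sub_mem (val_mem w) (Ideal.pow_le_pow_right (Nat.le_succ _) (val_mem q))
      have hQtHv : (∑ β ∈ Bk d (k+1) (n+1), q (addE β ⟨k, hk⟩) * mono x β)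
          - (∑ β ∈ Bk d (k+1) n, w (addE β ⟨k, hk⟩) * mono x β) ∈ (J x k) ^ (n+1) := by
        refine nzd hk hreg1 qrk ?_
        have e2 : ((∑ β ∈ Bk d (k+1) (n+1), q (addE β ⟨k, hk⟩) * mono x β)
            - (∑ β ∈ Bk d (k+1) n, w (addE β ⟨k, hk⟩) * mono x β)) * x ⟨k, hk⟩
            = (∑ β ∈ Bk d k (n+1), w β * mono x β)
              - (∑ β ∈ Bk d k (n+2), q β * mono x β) := by linear_combination -e
        rw [e2]; exact hGQ
      obtain ⟨W, hW⟩ := exists_rep_of_mem_pow hQtHv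
      have hval2 : (∑ β ∈ Bk d k (n+1), (w β - x ⟨k, hk⟩ * W β) * mono x β)
          ∈ (J x k) ^ (n+2) := by
        have h1 : (∑ β ∈ Bk d k (n+1), (w β - x ⟨k, hk⟩ * W β) * mono x β)
            = (∑ β ∈ Bk d k (n+1), w β * mono x β)
              - x ⟨k, hk⟩ * (∑ β ∈ Bk d k (n+1), W β * mono x β) := by
          rw [Finset.mul_sum, ← Finset.sum_sub_distrib]
          exact Finset.sum_congr rfl fun β _ => by ring
        rw [h1, ← hW]
        have h2 : (∑ β ∈ Bk d k (n+1), w β * mono x β)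
            - x ⟨k, hk⟩ * ((∑ β ∈ Bk d (k+1) (n+1), q (addE β ⟨k, hk⟩) * mono x β)
              - (∑ β ∈ Bk d (k+1) n, w (addE β ⟨k, hk⟩) * mono x β))
            = (∑ β ∈ Bk d k (n+2), q β * mono x β) := by linear_combination e
        rw [h2]
        exact val_mem q
      have hGcoef := qrk (n+1) _ hval2
      -- H-part
      have hHv : (∑ β ∈ Bk d (k+1) n, w (addE β ⟨k, hk⟩) * mono x β)
          ∈ (J x (k+1)) ^ (n+1) := by
        have h3 : (∑ β ∈ Bk d (k+1) n, w (addE β ⟨k, hk⟩) * mono x β)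
            = (∑ β ∈ Bk d (k+1) (n+1), q (addE β ⟨k, hk⟩) * mono x β)
              - ((∑ β ∈ Bk d (k+1) (n+1), q (addE β ⟨k, hk⟩) * mono x β)
                - (∑ β ∈ Bk d (k+1) n, w (addE β ⟨k, hk⟩) * mono x β)) := by ring
        rw [h3]
        exact sub_mem (val_mem _)
          (Ideal.pow_right_mono (J_mono x (Nat.le_succ k)) (n+1) hQtHv)
      have hHcoef := ihn (fun β => w (addE β ⟨k, hk⟩)) hHv
      -- conclude
      by_cases hβi : β ⟨k, hk⟩ = 0
      · have hβk : β ∈ Bk d k (n+1) := by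
          obtain ⟨h1, h2⟩ := mem_Bk.mp hβ
          refine mem_Bk.mpr ⟨h1, fun j hj => ?_⟩
          rcases Nat.lt_or_ge (j : ℕ) (k+1) with hl | hl
          · have : j = (⟨k, hk⟩ : Fin d) := Fin.ext (by simp only [Fin.val_mk]; omega)
            rwa [this]
          · exact h2 j hl
        have hmem := hGcoef β hβk
        have : w β = (w β - x ⟨k, hk⟩ * W β) + x ⟨k, hk⟩ * W β := by ring
        rw [this]
        exact add_mem (J_mono x (Nat.le_succ k) hmem)
          (Ideal.mul_mem_right _ _ (mem_J_self x (by simp)))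
      · have hsub : subE β ⟨k, hk⟩ ∈ Bk d (k+1) n := by
          obtain ⟨h1, h2⟩ := mem_Bk.mp hβ
          refine mem_Bk.mpr ⟨?_, fun j hj => ?_⟩
          · have := sum_addE (subE β ⟨k, hk⟩) ⟨k, hk⟩
            rw [addE_subE hβi, h1] at this
            omega
          · have : β j = 0 := h2 j hj
            simp [subE, this]
        have h5 : w (addE (subE β ⟨k, hk⟩) ⟨k, hk⟩) ∈ J x (k+1) := hHcoef _ hsub
        rwa [addE_subE hβi] at h5
lemma J_top (x : Fin d → R) : J x d = Ideal.span (Set.range x) := by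
  unfold J
  congr 1
  ext r
  constructor
  · rintro ⟨j, -, rfl⟩; exact ⟨j, rfl⟩
  · rintro ⟨j, rfl⟩; exact ⟨j, j.isLt, rfl⟩

/-- the Frobenius-type power ideal -/
def T (x : Fin d → R) (t : ℕ) : Ideal R := Ideal.span (Set.range fun i => x i ^ t)

lemma pow_mem_T (x : Fin d → R) (t : ℕ) (i : Fin d) : x i ^ t ∈ T x t :=
  Ideal.subset_span ⟨i, rfl⟩

lemma mono_mem_T {x : Fin d → R} {t : ℕ} {γ : Fin d → ℕ} {i : Fin d} (h : t ≤ γ i) :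
    mono x γ ∈ T x t := by
  have e : mono x γ = (x i ^ t) * (x i ^ (γ i - t) * ∏ j ∈ univ.erase i, x j ^ γ j) := by
    rw [mono, ← Finset.mul_prod_erase (a := i) (h := mem_univ i), ← mul_assoc, ← pow_add]
    congr 2
    omega
  rw [e]
  exact Ideal.mul_mem_right _ _ (pow_mem_T x t i)

lemma mem_Bk_top {n : ℕ} {β : Fin d → ℕ} : β ∈ Bk d d n ↔ (∑ i, β i) = n := by
  rw [mem_Bk]
  exact ⟨fun h => h.1, fun h => ⟨h, fun j hj => absurd j.isLt (not_lt.mpr hj)⟩⟩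

lemma rep_shift (x : Fin d → R) {s : Finset (Fin d → ℕ)} {k : ℕ} (hs : s ⊆ Bk d d k)
    (u : (Fin d → ℕ) → R) (i : Fin d) :
    (∑ β ∈ s, u β * mono x β) * x i
      = ∑ γ ∈ Bk d d (k+1),
          (if γ ∈ s.image (fun β => addE β i) then u (subE γ i) else 0) * mono x γ := by
  classical
  have himg : s.image (fun β => addE β i) ⊆ Bk d d (k+1) := by
    intro γ hγ
    obtain ⟨β, hβ, rfl⟩ := Finset.mem_image.mp hγ
    rw [mem_Bk_top, sum_addE, mem_Bk_top.mp (hs hβ)]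
  rw [Finset.sum_mul,
    ← Finset.sum_subset himg (fun γ _ hγ => by simp only [if_neg hγ, zero_mul]),
    Finset.sum_image (fun a _ b _ h => addE_injective i h)]
  refine Finset.sum_congr rfl fun β hβ => ?_
  simp only [if_pos (Finset.mem_image_of_mem _ hβ), subE_addE, mono_addE]
  ring

/-- multi-indices of degree `m`, divisible by some `t`-th power -/
def badF (d' t m : ℕ) : Finset (Fin d' → ℕ) := (Bk d' d' m).filter (fun β => ∃ i, t ≤ β i)

/-- multi-indices of degree `k` with all exponents `≤ a` -/
def boxF (d' a k : ℕ) : Finset (Fin d' → ℕ) := (Bk d' d' k).filter (fun β => ∀ i, β i ≤ a)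

lemma badstep {x : Fin d → R}
    (hreg : ∀ i : Fin d, ∀ z : R, z * x i ∈ J x (i : ℕ) → z ∈ J x (i : ℕ))
    {t n : ℕ} {z : R}
    (h1 : z ∈ Ideal.span (mono x '' ↑(badF d t n)))
    (h2 : z ∈ (Ideal.span (Set.range x)) ^ (n+1)) :
    z ∈ Ideal.span (mono x '' ↑(badF d t (n+1))) := by
  classical
  obtain ⟨u, hu⟩ := spanRep (mono x) (badF d t n) h1
  have hsub : badF d t n ⊆ Bk d d n := Finset.filter_subset _ _
  have hext : z = ∑ β ∈ Bk d d n, (if β ∈ badF d t n then u β else 0) * mono x β := by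
    rw [hu, ← Finset.sum_subset hsub
      (fun γ _ hγ => by simp only [if_neg hγ, zero_mul] : ∀ γ ∈ Bk d d n, γ ∉ badF d t n →
        (if γ ∈ badF d t n then u γ else 0) * mono x γ = 0)]
    exact Finset.sum_congr rfl fun β hβ => by rw [if_pos hβ]
  have hcoef := QR hreg d le_rfl n _ (by rw [← hext, J_top]; exact h2)
  rw [hu]
  refine Ideal.sum_mem _ fun β hβ => ?_
  have huβ : u β ∈ Ideal.span (Set.range x) := by
    have := hcoef β (hsub hβ)
    rwa [if_pos hβ, J_top] at this
  obtain ⟨v, hv⟩ := (Submodule.mem_span_range_iff_exists_fun R).mp huβ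
  have e : u β * mono x β = ∑ j, v j * mono x (addE β j) := by
    rw [← hv, Finset.sum_mul]
    exact Finset.sum_congr rfl fun j _ => by rw [smul_eq_mul, mono_addE]; ring
  rw [e]
  refine Ideal.sum_mem _ fun j _ => Ideal.mul_mem_left _ _ ?_
  have hβ' := Finset.mem_filter.mp hβ
  obtain ⟨i, hi⟩ := hβ'.2
  have hmem : addE β j ∈ badF d t (n+1) := by
    refine Finset.mem_filter.mpr ⟨?_, ⟨i, ?_⟩⟩
    · rw [mem_Bk_top, sum_addE, mem_Bk_top.mp hβ'.1]
    · simp only [addE]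
      omega
  exact Ideal.subset_span (Set.mem_image_of_mem (mono x) (Finset.mem_coe.mpr hmem))

lemma keyL {x : Fin d → R}
    (hreg : ∀ i : Fin d, ∀ z : R, z * x i ∈ J x (i : ℕ) → z ∈ J x (i : ℕ))
    {t : ℕ} (ht : 1 ≤ t) {m : ℕ} (w : (Fin d → ℕ) → R)
    (hval : (∑ β ∈ Bk d d m, w β * mono x β)
      ∈ T x t ⊔ (Ideal.span (Set.range x)) ^ (m+1)) :
    ∀ β ∈ Bk d d m, (∀ i, β i + 1 ≤ t) → w β ∈ Ideal.span (Set.range x) := by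
  classical
  intro β hβ hbox
  obtain ⟨a, ha, b, hb, hab⟩ := Submodule.mem_sup.mp hval
  by_cases hmt : m + 1 ≤ t
  · -- everything is in I^(m+1)
    have hT : T x t ≤ (Ideal.span (Set.range x)) ^ (m+1) := by
      rw [T, Ideal.span_le]
      rintro _ ⟨i, rfl⟩
      exact Ideal.pow_le_pow_right hmt
        (Ideal.pow_mem_pow
          (Ideal.subset_span (Set.mem_range_self i) :
            x i ∈ Ideal.span (Set.range x)) t)
    have : (∑ β ∈ Bk d d m, w β * mono x β) ∈ (Ideal.span (Set.range x)) ^ (m+1) := by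
      rw [← hab]; exact add_mem (hT ha) hb
    have := QR hreg d le_rfl m w (by rw [J_top]; exact this) β hβ
    rwa [J_top] at this
  · push_neg at hmt
    have htm : t ≤ m := by omega
    -- a lies in the span of bad monomials of degree t
    have haIm : a ∈ (Ideal.span (Set.range x)) ^ m := by
      have hv : (∑ β ∈ Bk d d m, w β * mono x β) ∈ (Ideal.span (Set.range x)) ^ m := by
        have := val_mem (x := x) (k := d) (n := m) w
        rwa [J_top] at this
      have : a = (∑ β ∈ Bk d d m, w β * mono x β) - b := by rw [← hab]; ring
      rw [this]
      exact sub_mem hv (Ideal.pow_le_pow_right (Nat.le_succ m) hb)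
    have habad : a ∈ Ideal.span (mono x '' ↑(badF d t t)) := by
      obtain ⟨c, hc⟩ := (Submodule.mem_span_range_iff_exists_fun R).mp ha
      rw [← hc]
      refine Ideal.sum_mem _ fun i _ => ?_
      rw [smul_eq_mul]
      have hmem : (fun j => if j = i then t else 0) ∈ badF d t t := by
        refine Finset.mem_filter.mpr ⟨mem_Bk_top.mpr ?_, ⟨i, by simp⟩⟩
        rw [Finset.sum_ite_eq' univ i (fun _ => t), if_pos (mem_univ i)]
      have heq : mono x (fun j => if j = i then t else 0) = x i ^ t := by
        rw [mono,
          Finset.prod_eq_single i (fun b _ hb => by simp [hb]) (fun h => absurd (mem_univ i) h)]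
        simp
      refine Ideal.mul_mem_left _ _
        (?_ : x i ^ t ∈ Ideal.span (mono x '' ↑(badF d t t)))
      exact heq ▸ Ideal.subset_span (Set.mem_image_of_mem _ (Finset.mem_coe.mpr hmem))
    have hiter : ∀ p, t + p ≤ m → a ∈ Ideal.span (mono x '' ↑(badF d t (t + p))) := by
      intro p
      induction p with
      | zero => intro _; simpa using habad
      | succ p ih =>
        intro hp
        have h1 := ih (by omega)
        have h2 : a ∈ (Ideal.span (Set.range x)) ^ (t + p + 1) :=
          Ideal.pow_le_pow_right (by omega) haIm
        exact badstep hreg h1 h2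
    have habm : a ∈ Ideal.span (mono x '' ↑(badF d t m)) := by
      have e : t + (m - t) = m := by omega
      rw [← e]
      exact hiter _ (by omega)
    obtain ⟨C, hC⟩ := spanRep (mono x) (badF d t m) habm
    have hsub : badF d t m ⊆ Bk d d m := Finset.filter_subset _ _
    have hdiff : (∑ γ ∈ Bk d d m, (w γ - (if γ ∈ badF d t m then C γ else 0)) * mono x γ)
        ∈ (Ideal.span (Set.range x)) ^ (m+1) := by
      have e0 : a = ∑ γ ∈ Bk d d m, (if γ ∈ badF d t m then C γ else 0) * mono x γ := by
        rw [hC, ← Finset.sum_subset hsub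
          (fun γ _ hγ => by simp only [if_neg hγ, zero_mul] : ∀ γ ∈ Bk d d m, γ ∉ badF d t m →
            (if γ ∈ badF d t m then C γ else 0) * mono x γ = 0)]
        exact Finset.sum_congr rfl fun γ hγ => by rw [if_pos hγ]
      have e : (∑ γ ∈ Bk d d m, (w γ - (if γ ∈ badF d t m then C γ else 0)) * mono x γ)
          = (∑ γ ∈ Bk d d m, w γ * mono x γ) - a := by
        rw [e0, ← Finset.sum_sub_distrib]
        exact Finset.sum_congr rfl fun γ _ => by ring
      rw [e]
      have : (∑ γ ∈ Bk d d m, w γ * mono x γ) - a = b := by rw [← hab]; ring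
      rw [this]
      exact hb
    have hcoef := QR hreg d le_rfl m _ (by rw [J_top]; exact hdiff) β hβ
    rw [J_top] at hcoef
    have hnotbad : β ∉ badF d t m := by
      intro hbad
      obtain ⟨i, hi⟩ := (Finset.mem_filter.mp hbad).2
      have := hbox i
      omega
    rwa [if_neg hnotbad, sub_zero] at hcoef

lemma mono_zero (x : Fin d → R) : mono x (fun _ => 0) = 1 := by simp [mono]

lemma mono_const (x : Fin d → R) (a : ℕ) : mono x (fun _ => a) = (∏ i, x i) ^ a := by
  rw [mono, Finset.prod_pow]

lemma boxF_zero (a : ℕ) : boxF d a 0 = {fun _ => 0} := by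
  ext β
  simp only [boxF, Finset.mem_filter, Bk_zero, Finset.mem_singleton]
  constructor
  · rintro ⟨h, -⟩; exact h
  · rintro rfl; exact ⟨rfl, fun i => Nat.zero_le a⟩

lemma boxF_last (a : ℕ) : boxF d a (d * a) = ({fun _ => a} : Finset (Fin d → ℕ)) := by
  ext β
  simp only [boxF, Finset.mem_filter, mem_Bk_top, Finset.mem_singleton]
  constructor
  · rintro ⟨hsum, hle⟩
    funext i
    by_contra hne
    have hlt : β i < a := lt_of_le_of_ne (hle i) hne
    have hstrict : (∑ j, β j) < ∑ _j : Fin d, a :=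
      Finset.sum_lt_sum (fun j _ => hle j) ⟨i, mem_univ i, hlt⟩
    rw [Finset.sum_const, card_univ, Fintype.card_fin, smul_eq_mul] at hstrict
    omega
  · rintro rfl
    refine ⟨?_, fun i => le_rfl⟩
    rw [Finset.sum_const, card_univ, Fintype.card_fin, smul_eq_mul]

theorem main (x : Fin d → R)
    (hreg : ∀ i : Fin d, ∀ z : R, z * x i ∈ J x (i : ℕ) → z ∈ J x (i : ℕ))
    (a : ℕ) :
    (Ideal.span (Set.range fun i => x i ^ (a+1))).colon (Ideal.span (Set.range x)) =
      Ideal.span (Set.range (fun i => x i ^ (a+1)) ∪ {(∏ i, x i) ^ a}) := by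
  classical
  apply le_antisymm
  · -- hard direction
    intro z hz
    have hzi : ∀ i, z * x i ∈ T x (a+1) := fun i =>
      (smul_eq_mul z (x i)) ▸ Submodule.mem_colon.mp hz (x i)
        (Ideal.subset_span (Set.mem_range_self i))
    have loop : ∀ k, k ≤ d * a →
        z ∈ T x (a+1) ⊔ Ideal.span (mono x '' ↑(boxF d a k)) := by
      intro k
      induction k with
      | zero =>
        intro _
        have h1 : (1 : R) ∈ Ideal.span (mono x '' ↑(boxF d a 0)) := by
          rw [boxF_zero]
          exact (mono_zero x) ▸ Ideal.subset_span
            (Set.mem_image_of_mem _ (by simp : (fun _ => 0) ∈ (↑({fun _ => 0} : Finset (Fin d → ℕ)) : Set (Fin d → ℕ))))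
        exact Submodule.mem_sup_right (by simpa using Ideal.mul_mem_left _ z h1)
      | succ k ih =>
        intro hk1
        obtain ⟨c, hc, b, hbmem, hcb⟩ := Submodule.mem_sup.mp (ih (by omega))
        obtain ⟨u, hu⟩ := spanRep (mono x) (boxF d a k) hbmem
        have hsubBox : boxF d a k ⊆ Bk d d k := Finset.filter_subset _ _
        have hcoefI : ∀ β ∈ boxF d a k, u β ∈ Ideal.span (Set.range x) := by
          intro β₀ hβ₀
          have hroom : ∃ i, β₀ i + 1 ≤ a := by
            by_contra hcon
            push_neg at hcon
            have hbox := (Finset.mem_filter.mp hβ₀).2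
            have hall : ∀ i, β₀ i = a := fun i =>
              le_antisymm (hbox i) (by have := hcon i; omega)
            have hsum : (∑ i, β₀ i) = d * a := by
              rw [Finset.sum_congr rfl fun i _ => hall i, Finset.sum_const, card_univ,
                Fintype.card_fin, smul_eq_mul]
            have := mem_Bk_top.mp (hsubBox hβ₀)
            omega
          obtain ⟨i, hi⟩ := hroom
          have hSisub : (boxF d a k).filter (fun β => β i + 1 ≤ a) ⊆ Bk d d k :=
            fun β hβ => hsubBox (Finset.mem_filter.mp hβ).1
          have hsT : (∑ β ∈ (boxF d a k).filter (fun β => β i + 1 ≤ a), u β * mono x β) * x i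
              ∈ T x (a+1) := by
            have hsplit : (∑ β ∈ boxF d a k, u β * mono x β) * x i
                = (∑ β ∈ (boxF d a k).filter (fun β => β i + 1 ≤ a), u β * mono x β) * x i
                  + ∑ β ∈ (boxF d a k).filter (fun β => ¬ (β i + 1 ≤ a)),
                      u β * (mono x β * x i) := by
              rw [← Finset.sum_filter_add_sum_filter_not (boxF d a k) (fun β => β i + 1 ≤ a),
                add_mul, Finset.sum_mul]
              congr 1
              rw [Finset.sum_mul]
              exact Finset.sum_congr rfl fun β _ => by ring
            have hz2 : (∑ β ∈ boxF d a k, u β * mono x β) * x i ∈ T x (a+1) := by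
              rw [← hu]
              have hb : b = z - c := by rw [← hcb]; ring
              rw [hb, sub_mul]
              exact sub_mem (hzi i) (Ideal.mul_mem_right _ _ hc)
            have hrest : ∑ β ∈ (boxF d a k).filter (fun β => ¬ (β i + 1 ≤ a)),
                u β * (mono x β * x i) ∈ T x (a+1) := by
              refine Ideal.sum_mem _ fun β hβ => ?_
              obtain ⟨hβbox, hβi⟩ := Finset.mem_filter.mp hβ
              have hbi : β i = a :=
                le_antisymm ((Finset.mem_filter.mp hβbox).2 i) (by omega)
              have e : mono x β * x i = mono x (addE β i) := by rw [mono_addE]; ring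
              rw [e]
              exact Ideal.mul_mem_left _ _ (mono_mem_T (i := i) (by simp [addE, hbi]))
            have e2 : (∑ β ∈ (boxF d a k).filter (fun β => β i + 1 ≤ a), u β * mono x β) * x i
                = (∑ β ∈ boxF d a k, u β * mono x β) * x i
                  - ∑ β ∈ (boxF d a k).filter (fun β => ¬ (β i + 1 ≤ a)),
                      u β * (mono x β * x i) := by
              rw [hsplit]; ring
            rw [e2]
            exact sub_mem hz2 hrest
          rw [rep_shift x hSisub u i] at hsT
          have hkey := keyL hreg (Nat.le_add_left 1 a) _ (Submodule.mem_sup_left hsT)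
          have hγmem : addE β₀ i ∈ Bk d d (k+1) :=
            mem_Bk_top.mpr (by rw [sum_addE, mem_Bk_top.mp (hsubBox hβ₀)])
          have hγbox : ∀ j, (addE β₀ i) j + 1 ≤ a + 1 := by
            intro j
            by_cases hji : j = i
            · subst hji; simp [addE]; omega
            · simp only [addE, if_neg hji]
              have := (Finset.mem_filter.mp hβ₀).2 j
              omega
          have hval := hkey (addE β₀ i) hγmem hγbox
          rw [if_pos (Finset.mem_image_of_mem _ (Finset.mem_filter.mpr ⟨hβ₀, hi⟩)),
            subE_addE] at hval
          exact hval
        -- rebuild z inside the bigger box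
        have hz3 : z = c + ∑ β ∈ boxF d a k, u β * mono x β := by rw [← hu, hcb]
        rw [hz3]
        refine add_mem (Submodule.mem_sup_left hc) (Ideal.sum_mem _ fun β hβ => ?_)
        obtain ⟨v, hv⟩ := (Submodule.mem_span_range_iff_exists_fun R).mp (hcoefI β hβ)
        have e : u β * mono x β = ∑ j, v j * mono x (addE β j) := by
          rw [← hv, Finset.sum_mul]
          exact Finset.sum_congr rfl fun j _ => by rw [smul_eq_mul, mono_addE]; ring
        rw [e]
        refine Ideal.sum_mem _ fun j _ => ?_
        by_cases hj : β j + 1 ≤ a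
        · refine Submodule.mem_sup_right (Ideal.mul_mem_left _ _
            (Ideal.subset_span (Set.mem_image_of_mem _ (Finset.mem_coe.mpr ?_))))
          refine Finset.mem_filter.mpr ⟨mem_Bk_top.mpr ?_, ?_⟩
          · rw [sum_addE, mem_Bk_top.mp (hsubBox hβ)]
          · intro j'
            by_cases hj' : j' = j
            · subst hj'; simp [addE]; omega
            · simp only [addE, if_neg hj']
              have := (Finset.mem_filter.mp hβ).2 j'
              omega
        · have hbj : β j = a :=
            le_antisymm ((Finset.mem_filter.mp hβ).2 j) (by omega)
          exact Submodule.mem_sup_left (Ideal.mul_mem_left _ _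
            (mono_mem_T (i := j) (by simp [addE, hbj])))
    have hfin := loop (d * a) le_rfl
    rw [boxF_last] at hfin
    rw [Ideal.span_union]
    have himg : mono x '' (↑({fun _ => a} : Finset (Fin d → ℕ)) : Set (Fin d → ℕ))
        = {(∏ i, x i) ^ a} := by
      rw [Finset.coe_singleton, Set.image_singleton, mono_const]
    rw [himg] at hfin
    exact hfin
  · -- easy direction
    rw [Ideal.span_union]
    apply sup_le
    · rw [Ideal.span_le]
      rintro _ ⟨i, rfl⟩
      rw [SetLike.mem_coe, Submodule.mem_colon]
      intro p _
      rw [smul_eq_mul]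
      exact Ideal.mul_mem_right p _ (pow_mem_T x (a+1) i)
    · rw [Ideal.span_le, Set.singleton_subset_iff, SetLike.mem_coe, Submodule.mem_colon]
      intro p hp
      rw [smul_eq_mul]
      refine Submodule.span_induction ?_ ?_ ?_ ?_ hp
      · rintro _ ⟨j, rfl⟩
        have e : (∏ i, x i) ^ a * x j = mono x (addE (fun _ => a) j) := by
          rw [mono_addE, mono_const]; ring
        rw [e]
        exact mono_mem_T (i := j) (by simp [addE])
      · simp
      · intro p q _ _ hp hq
        rw [mul_add]
        exact add_mem hp hq
      · intro r p _ hp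
        rw [smul_eq_mul, mul_comm r p, ← mul_assoc]
        exact Ideal.mul_mem_right r _ hp


end ColonAux

/-- For a regular sequence `x₁,…,x_d` in a commutative ring `R` and `t ≥ 1`, the colon ideal
`((x₁ᵗ,…,x_dᵗ) : (x₁,…,x_d))` equals `(x₁ᵗ,…,x_dᵗ, y^{t-1})` where `y = x₁⋯x_d`. -/
theorem colon_of_power_parameter_ideal (R : Type*) [CommRing R] (d : ℕ) (x : Fin d → R)
    (hreg : ∀ i : Fin d, ∀ z : R,
      z * x i ∈ Ideal.span (x '' {j | (j : ℕ) < (i : ℕ)}) →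
      z ∈ Ideal.span (x '' {j | (j : ℕ) < (i : ℕ)}))
    (t : ℕ) (ht : 1 ≤ t) :
    (Ideal.span (Set.range fun i => x i ^ t)).colon (Ideal.span (Set.range x)) =
      Ideal.span (Set.range (fun i => x i ^ t) ∪ {(∏ i, x i) ^ (t - 1)}) := by
  obtain ⟨a, rfl⟩ : ∃ a, t = a + 1 := ⟨t - 1, by omega⟩
  have h1 : (a + 1) - 1 = a := rfl
  rw [h1]
  exact ColonAux.main x hreg a
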